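/- Let k ≥ 1 and let f be a C^{k+1} function on a compact interval I. If the derivative f' vanishes at k points x_1 < x_2 < ⋯ < x_k of I, then for every x ∈ I, |f'(x)| ≤ ‖f^{(k+1)}‖_∞ · |I|^k, where ‖f^{(k+1)}‖_∞ is the supremum norm of the (k+1)-st derivative on I and |I| is the length of I. -/

import Mathlib

noncomputable section

open Set

namespace Paper

/-- **Lemma (elementary analysis).** Let `k ≥ 1` and `f` be `C^{k+1}` on a compact interval
`I = [a,b]`. If `f'` vanishes at `k` points `x_1 < x_2 < ⋯ < x_k` of `I`, then for every
`y ∈ I` one has `|f'(y)| ≤ ‖f^{(k+1)}‖_∞ · |I|^k`. -/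
theorem deriv_bound_of_zeros (k : ℕ) (hk : 1 ≤ k) (a b : ℝ) (hab : a ≤ b)
    (f : ℝ → ℝ) (hf : ContDiffOn ℝ (k + 1) f (Icc a b))
    (x : ℕ → ℝ) (hxmem : ∀ i < k, x i ∈ Icc a b)
    (hxlt : ∀ i j, i < j → j < k → x i < x j)
    (hzero : ∀ i < k, derivWithin f (Icc a b) (x i) = 0)
    (y : ℝ) (hy : y ∈ Icc a b) :
    |derivWithin f (Icc a b) y| ≤
      (⨆ z : Icc a b, |iteratedDerivWithin (k + 1) f (Icc a b) z|) * (b - a) ^ k := by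
  set S : Set ℝ := Icc a b with hS
  set g : ℕ → ℝ → ℝ := fun n => iteratedDerivWithin n f S with hg
  -- nonnegativity of the sup
  have hne : S.Nonempty := ⟨a, le_refl a, hab⟩
  have hM0 : 0 ≤ ⨆ z : S, |g (k + 1) z| := by
    have : Nonempty S := ⟨⟨a, le_refl a, hab⟩⟩
    exact Real.iSup_nonneg fun z => abs_nonneg _
  rcases eq_or_lt_of_le hab with heq | hlt
  · -- degenerate case a = b : the interval is a single point, derivWithin is 0
    subst heq
    have hyy : y = a := le_antisymm hy.2 hy.1
    subst hyy
    have : derivWithin f S y = 0 := by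
      apply derivWithin_zero_of_not_accPt
      rw [AccPt, nhdsWithin, inf_assoc, Filter.inf_principal, ← nhdsWithin, inter_comm, ← diff_eq,
        Filter.not_neBot]
      have : S \ {y} = ∅ := by
        apply eq_empty_of_subset_empty
        intro z hz
        have : z = y := le_antisymm hz.1.2 hz.1.1
        exact (hz.2 this).elim
      rw [this]
      simp
    rw [this, abs_zero]
    have : (y - y : ℝ) ^ k = 0 := by
      rw [sub_self]; exact zero_pow (by omega)
    rw [this, mul_zero]
  · -- main case a < b
    have hud : UniqueDiffOn ℝ S := uniqueDiffOn_Icc hlt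
    -- boundedness of |g (k+1)| on S
    have hcont : ContinuousOn (g (k + 1)) S :=
      hf.continuousOn_iteratedDerivWithin le_rfl hud
    obtain ⟨C, hC⟩ := (isCompact_Icc (a := a) (b := b)).exists_bound_of_continuousOn hcont
    have hbdd : BddAbove (Set.range fun z : S => |g (k + 1) z|) := by
      refine ⟨C, ?_⟩
      rintro _ ⟨z, rfl⟩
      simpa [Real.norm_eq_abs] using hC z z.2
    set M : ℝ := ⨆ z : S, |g (k + 1) z| with hM
    -- Step 1 : for each level 1 ≤ m ≤ k, g m has a zero in S.
    have key : ∀ i, i < k → ∃ w : ℕ → ℝ, (∀ j, j < k - i → w j ∈ S) ∧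
        (∀ p q, p < q → q < k - i → w p < w q) ∧ (∀ j, j < k - i → g (i + 1) (w j) = 0) := by
      intro i hi
      induction i with
      | zero =>
        refine ⟨x, fun j hj => hxmem j (by omega), fun p q hpq hq => hxlt p q hpq (by omega),
          fun j hj => ?_⟩
        have := hzero j (by omega)
        simpa [hg, iteratedDerivWithin_one] using this
      | succ i ih =>
        obtain ⟨w, hwmem, hwlt, hwz⟩ := ih (by omega)
        -- apply Rolle on each [w j, w (j+1)]
        have hroll : ∀ j, j < k - (i + 1) → ∃ c ∈ Ioo (w j) (w (j + 1)), g (i + 2) c = 0 := by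
          intro j hj
          have hj1 : j + 1 < k - i := by omega
          have hj0 : j < k - i := by omega
          have hwj : w j < w (j + 1) := hwlt j (j + 1) (by omega) hj1
          have hsub : Icc (w j) (w (j + 1)) ⊆ S :=
            Icc_subset_Icc (hwmem j hj0).1 (hwmem (j + 1) hj1).2
          have hle : ((i + 1 : ℕ) : WithTop ℕ∞) ≤ ((k : ℕ) : WithTop ℕ∞) + 1 := by
            exact_mod_cast (by omega : i + 1 ≤ k + 1)
          have hcg : ContinuousOn (g (i + 1)) (Icc (w j) (w (j + 1))) :=
            (hf.continuousOn_iteratedDerivWithin hle hud).mono hsub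
          obtain ⟨c, hc, hc0⟩ := exists_deriv_eq_zero hwj hcg
            ((hwz j hj0).trans (hwz (j + 1) hj1).symm)
          refine ⟨c, hc, ?_⟩
          have hcS : S ∈ nhds c := by
            have : c ∈ Ioo a b :=
              ⟨lt_of_le_of_lt (hwmem j hj0).1 hc.1, lt_of_lt_of_le hc.2 (hwmem (j + 1) hj1).2⟩
            exact Icc_mem_nhds this.1 this.2
          have hcmem : c ∈ S := mem_of_mem_nhds hcS
          show iteratedDerivWithin ((i + 1) + 1) f S c = 0
          rw [iteratedDerivWithin_succ]
          rw [derivWithin_of_mem_nhds hcS]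
          exact hc0
        choose c hcmem hcz using hroll
        classical
        refine ⟨fun j => if h : j < k - (i + 1) then c j h else 0, fun j hj => ?_,
          fun p q hpq hq => ?_, fun j hj => ?_⟩
        · simp only [dif_pos hj]
          have hj1 : j + 1 < k - i := by omega
          have hj0 : j < k - i := by omega
          exact ⟨le_of_lt (lt_of_le_of_lt (hwmem j hj0).1 (hcmem j hj).1),
            le_of_lt (lt_of_lt_of_le (hcmem j hj).2 (hwmem (j + 1) hj1).2)⟩
        · have hp : p < k - (i + 1) := by omega
          simp only [dif_pos hp, dif_pos hq]
          have h1 : c p hp < w (p + 1) := (hcmem p hp).2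
          have h2 : w q < c q hq := (hcmem q hq).1
          have h3 : w (p + 1) ≤ w q := by
            rcases Nat.lt_or_ge (p + 1) q with h | h
            · exact le_of_lt (hwlt (p + 1) q h (by omega))
            · have hpq1 : p + 1 = q := by omega
              rw [hpq1]
          linarith
        · simp only [dif_pos hj]
          exact hcz j hj
    have hZero : ∀ m, 1 ≤ m → m ≤ k → ∃ z ∈ S, g m z = 0 := by
      intro m h1 h2
      obtain ⟨w, hwmem, _, hwz⟩ := key (m - 1) (by omega)
      have h0 : 0 < k - (m - 1) := by omega
      refine ⟨w 0, hwmem 0 h0, ?_⟩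
      have := hwz 0 h0
      have hm : m - 1 + 1 = m := by omega
      rwa [hm] at this
    -- Step 2 : downward induction bound
    have hbound : ∀ j, j ≤ k → ∀ z ∈ S, |g (k + 1 - j) z| ≤ M * (b - a) ^ j := by
      intro j
      induction j with
      | zero =>
        intro _ z hz
        simp only [Nat.sub_zero, pow_zero, mul_one]
        exact le_ciSup hbdd ⟨z, hz⟩
      | succ j ih =>
        intro hjk z hz
        have hij := ih (by omega)
        set m : ℕ := k - j with hm
        have hm1 : 1 ≤ m := by omega
        have hmk : m ≤ k := by omega
        have he1 : k + 1 - (j + 1) = m := by omega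
        have he2 : k + 1 - j = m + 1 := by omega
        obtain ⟨z₀, hz₀, hz₀0⟩ := hZero m hm1 hmk
        rw [he1]
        have hmlt : ((m : ℕ) : WithTop ℕ∞) < ((k : ℕ) : WithTop ℕ∞) + 1 := by
          exact_mod_cast (show m < k + 1 by omega)
        have hdiff : DifferentiableOn ℝ (g m) S :=
          hf.differentiableOn_iteratedDerivWithin hmlt hud
        have hder : ∀ w ∈ S, ‖derivWithin (g m) S w‖ ≤ M * (b - a) ^ j := by
          intro w hw
          have : derivWithin (g m) S w = g (m + 1) w :=
            (congrFun iteratedDerivWithin_succ w).symm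
          rw [this, Real.norm_eq_abs]
          have := hij w hw
          rwa [he2] at this
        have hmvt := Convex.norm_image_sub_le_of_norm_derivWithin_le hdiff hder
          (convex_Icc a b) hz₀ hz
        rw [hz₀0, sub_zero, Real.norm_eq_abs, Real.norm_eq_abs] at hmvt
        have hdist : |z - z₀| ≤ b - a := by
          rw [abs_sub_le_iff]
          constructor <;> linarith [hz.1, hz.2, hz₀.1, hz₀.2]
        calc |g m z| ≤ M * (b - a) ^ j * |z - z₀| := hmvt
          _ ≤ M * (b - a) ^ j * (b - a) := by
              exact mul_le_mul_of_nonneg_left hdist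
                (mul_nonneg hM0 (pow_nonneg (by linarith) j))
          _ = M * (b - a) ^ (j + 1) := by ring
    have hfin := hbound k le_rfl y hy
    have hk1 : k + 1 - k = 1 := by omega
    rw [hk1] at hfin
    have hfin' : |iteratedDerivWithin 1 f S y| ≤ M * (b - a) ^ k := hfin
    rwa [iteratedDerivWithin_one] at hfin'

end Paper
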